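/- In any trend stationary equilibrium of the two-sector large open economy with growth rate G > 1, writing α = β(λΦ(R/m) + 1 − λ), we have: G = R; B_t = −D/(R−1) for all t; W_t = m·K_t/(1−α) and P_t = (α/(1−α))·m·K_t + D/(R−1) for all t ≥ 1; and if in addition W_0 = m·K_0/(1−α) for the initial capital K_0, then P_t = (α/(1−α))·R^t·m·K_0 + D/(R−1) for all t ≥ 0, so the land price strictly exceeds its fundamental value D/(R−1). (Lemma: a growing trend stationary equilibrium is bubbly with explicit price path.) -/

import Mathlib

open Filter Topology MeasureTheory

/-- **Assumption 1.** `Φ` (the law `μ` of productivity) is an absolutely continuous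
cdf on `[0,∞)` with `Φ(z) < 1` for all `z` and a finite mean. -/
structure Assumption1 (μ : Measure ℝ) : Prop where
  prob : IsProbabilityMeasure μ
  supp : μ (Set.Iio 0) = 0
  absCont : μ ≪ MeasureTheory.volume
  lt_one : ∀ z : ℝ, μ (Set.Iic z) < 1
  finite_mean : Integrable id μ

/-- The cdf `Φ` of the productivity distribution `μ`. -/
noncomputable def Phi (μ : Measure ℝ) (z : ℝ) : ℝ := (μ (Set.Iic z)).toReal

/-- The risk premium `π(R) = ∫ max{0, mz − R} dΦ(z)` on unlevered capital investment. -/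
noncomputable def premium (μ : Measure ℝ) (m R : ℝ) : ℝ := ∫ z, max 0 (m * z - R) ∂μ

/-- The leverage threshold `λ̄ = ((1−β)/β)·(∫ max{mz−1, 0} dΦ(z))⁻¹`. -/
noncomputable def lamBar (β m : ℝ) (μ : Measure ℝ) : ℝ :=
  ((1 - β) / β) * (∫ z, max (m * z - 1) 0 ∂μ)⁻¹

/-- **Trend stationary equilibrium** of the two-sector large open economy with linear
technology `F(K,X) = mK + DX`: gross risk-free rate `R > 1`, growth rate `G > 0`,
threshold `z̄ = R/m` with `Φ(z̄) > 1 − 1/λ`, and sequences of aggregate wealth,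
capital, land price, and external savings satisfying the equilibrium conditions,
with `B_t/W_t → 0`. -/
structure TSE (μ : Measure ℝ) (β lam m D : ℝ)
    (R G : ℝ) (W K P B : ℕ → ℝ) : Prop where
  hR : 1 < R
  hG : 0 < G
  hthr : 1 - 1 / lam < Phi μ (R / m)
  hW : ∀ t, 0 < W t
  hP : ∀ t, 0 < P t
  price : ∀ t, R = (P (t + 1) + D) / P t
  growth : G = β * (R + lam * premium μ m R)
  Wdyn : ∀ t, W (t + 1) = G * W t
  Kdyn : ∀ t, K (t + 1) = β * lam * W t * ∫ z in Set.Ioi (R / m), z ∂μ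
  bond : ∀ t, P t + B t = β * (lam * Phi μ (R / m) + 1 - lam) * W t
  wealth : ∀ t, W (t + 1) = m * K (t + 1) + R * (P t + B t)
  hBW : Filter.Tendsto (fun t => B t / W t) Filter.atTop (nhds 0)

/-- **Lemma.** In any trend stationary equilibrium of the two-sector large open economy
with growth rate `G > 1`, writing `α = β(λΦ(R/m) + 1 − λ)`: `G = R`;
`B_t = −D/(R−1)`; `W_t = mK_t/(1−α)` and `P_t = (α/(1−α))mK_t + D/(R−1)` for `t ≥ 1`;
if moreover `W₀ = mK₀/(1−α)`, then `P_t = (α/(1−α))·R^t·mK₀ + D/(R−1)` for all `t`;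
and the land price strictly exceeds its fundamental value `D/(R−1)`. -/
theorem tse_growth_bubbly
    (μ : Measure ℝ) (hμ : Assumption1 μ)
    (β lam m D : ℝ) (hβ : β ∈ Set.Ioo (0 : ℝ) 1) (hlam : 1 ≤ lam)
    (hm : 0 < m) (hD : 0 < D)
    (R G : ℝ) (W K P B : ℕ → ℝ)
    (heq : TSE μ β lam m D R G W K P B) (hG : 1 < G)
    (alph : ℝ) (halph : alph = β * (lam * Phi μ (R / m) + 1 - lam)) :
    G = R ∧
    (∀ t, B t = -(D / (R - 1))) ∧
    (∀ t, 1 ≤ t → W t = m * K t / (1 - alph) ∧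
      P t = alph / (1 - alph) * (m * K t) + D / (R - 1)) ∧
    (W 0 = m * K 0 / (1 - alph) →
      ∀ t, P t = alph / (1 - alph) * R ^ t * (m * K 0) + D / (R - 1)) ∧
    (∀ t, D / (R - 1) < P t) := by
  obtain ⟨hβ0, hβ1⟩ := hβ
  have hR1 := heq.hR
  have hR0 : (0:ℝ) < R := lt_trans one_pos hR1
  have hG0 := heq.hG
  have hGne : G ≠ 0 := ne_of_gt hG0
  have hlam0 : (0:ℝ) < lam := lt_of_lt_of_le one_pos hlam
  have hRm1 : R - 1 ≠ 0 := by linarith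
  -- α > 0
  have halph0 : 0 < alph := by
    rw [halph]
    apply mul_pos hβ0
    have hthr := heq.hthr
    have h1 : lam * (1 - 1/lam) < lam * Phi μ (R/m) :=
      mul_lt_mul_of_pos_left hthr hlam0
    have h2 : lam * (1 - 1/lam) = lam - 1 := by field_simp
    linarith
  -- W t = G^t * W 0
  have hWpow : ∀ t, W t = G ^ t * W 0 := by
    intro t; induction t with
    | zero => simp
    | succ n ih => rw [heq.Wdyn n, ih, pow_succ]; ring
  have hW0 := heq.hW 0
  -- W → ∞
  have hWtop : Tendsto W atTop atTop := by
    have h : Tendsto (fun t : ℕ => G ^ t * W 0) atTop atTop :=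
      (tendsto_pow_atTop_atTop_of_one_lt hG).atTop_mul_const hW0
    exact h.congr (fun t => (hWpow t).symm)
  -- land price recursion
  have hPrec : ∀ t, P (t+1) = R * P t - D := by
    intro t
    have h := heq.price t
    have hp := heq.hP t
    field_simp at h
    linarith
  -- bond with α
  have hbond : ∀ t, P t + B t = alph * W t := fun t => by
    rw [halph]; exact heq.bond t
  -- recursion identity for B/W
  have hconst : ∀ t : ℕ,
      B (t+1) / W (t+1) - (R/G) * (B t / W t) - D / W (t+1)
        = alph * (G - R) / G := by
    intro t
    have hWt := heq.hW t
    have hWt1 := heq.hW (t+1)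
    have hWd := heq.Wdyn t
    have h1 := hbond t
    have h2 := hbond (t+1)
    have h3 := hPrec t
    have hB1 : B (t+1) = alph * (G * W t) - R * (alph * W t - B t) + D := by
      have hPt : P t = alph * W t - B t := by linarith
      rw [← hWd]
      linear_combination h2 - h3 - R * hPt
    rw [hB1, hWd]
    field_simp
    ring
  -- limit of the identity is 0
  have hlim : Tendsto
      (fun t => B (t+1) / W (t+1) - (R/G) * (B t / W t) - D / W (t+1))
      atTop (nhds 0) := by
    have h1 : Tendsto (fun t => B (t+1) / W (t+1)) atTop (nhds 0) :=
      heq.hBW.comp (tendsto_add_atTop_nat 1)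
    have h2 : Tendsto (fun t => (R/G) * (B t / W t)) atTop (nhds 0) := by
      simpa using heq.hBW.const_mul (R/G)
    have h3 : Tendsto (fun t => D / W (t+1)) atTop (nhds 0) :=
      tendsto_const_nhds.div_atTop (hWtop.comp (tendsto_add_atTop_nat 1))
    simpa using (h1.sub h2).sub h3
  have hzero : (0:ℝ) = alph * (G - R) / G :=
    tendsto_nhds_unique hlim ((tendsto_congr hconst).mpr tendsto_const_nhds)
  have hzero : alph * (G - R) / G = 0 := hzero.symm
  have hGR : G = R := by
    rcases mul_eq_zero.mp (by
      field_simp at hzero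
      rw [mul_zero] at hzero
      exact hzero) with h | h
    · exact absurd h (ne_of_gt halph0)
    · linarith
  -- B recursion and closed form
  have hBrec : ∀ t, B (t+1) = R * B t + D := by
    intro t
    have h1 := hbond t
    have h2 := hbond (t+1)
    have h3 := hPrec t
    have hWd : W (t+1) = R * W t := by rw [heq.Wdyn t, hGR]
    linear_combination h2 - h3 - R * h1 + alph * hWd
  have hBform : ∀ t, B t = R ^ t * (B 0 + D/(R-1)) - D/(R-1) := by
    intro t; induction t with
    | zero => simp
    | succ n ih =>
      rw [hBrec n, ih, pow_succ]
      field_simp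
      ring
  have hWR : ∀ t, W t = R ^ t * W 0 := by
    intro t; rw [hWpow t, hGR]
  -- B 0 = -D/(R-1)
  have hB0 : B 0 + D/(R-1) = 0 := by
    have hBt : ∀ t, B t / W t = (B 0 + D/(R-1)) / W 0 - (D/(R-1)) / W t := by
      intro t
      rw [hBform t]
      rw [hWR t]
      have hRt : R ^ t ≠ 0 := pow_ne_zero _ (ne_of_gt hR0)
      field_simp
    have hlim2 : Tendsto (fun t => (B 0 + D/(R-1)) / W 0 - (D/(R-1)) / W t)
        atTop (nhds ((B 0 + D/(R-1)) / W 0)) := by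
      simpa using tendsto_const_nhds.sub (tendsto_const_nhds.div_atTop hWtop)
    have h0 : (B 0 + D/(R-1)) / W 0 = 0 :=
      tendsto_nhds_unique (((tendsto_congr hBt).mp heq.hBW)) hlim2 |>.symm
    exact (div_eq_zero_iff.mp h0).resolve_right (ne_of_gt hW0)
  have hBall : ∀ t, B t = -(D/(R-1)) := by
    intro t; rw [hBform t, hB0]; ring
  -- P t = α W t + D/(R-1)
  have hPW : ∀ t, P t = alph * W t + D/(R-1) := by
    intro t
    have := hbond t
    have := hBall t
    linarith
  -- positivity of the truncated mean integral
  haveI : IsProbabilityMeasure μ := hμ.prob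
  have hIoi : μ (Set.Ioi (R/m)) ≠ 0 := by
    intro h0
    have hle : μ Set.univ ≤ μ (Set.Iic (R/m)) + μ (Set.Ioi (R/m)) := by
      rw [← Set.Iic_union_Ioi]; exact measure_union_le _ _
    rw [h0, add_zero, measure_univ] at hle
    exact absurd (lt_of_le_of_lt hle (hμ.lt_one _)) (lt_irrefl _)
  have hzbar : 0 < R/m := div_pos hR0 hm
  have hI : 0 < ∫ z in Set.Ioi (R/m), z ∂μ := by
    have hmono : (R/m) * (μ (Set.Ioi (R/m))).toReal ≤ ∫ z in Set.Ioi (R/m), z ∂μ := by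
      have h := setIntegral_mono_on
        (integrableOn_const (measure_ne_top μ _))
        (hμ.finite_mean.integrableOn (s := Set.Ioi (R/m)))
        measurableSet_Ioi
        (fun x hx => le_of_lt hx)
      simpa [setIntegral_const, smul_eq_mul, mul_comm, measureReal_def] using h
    have hpos : 0 < (μ (Set.Ioi (R/m))).toReal :=
      ENNReal.toReal_pos hIoi (measure_ne_top μ _)
    exact lt_of_lt_of_le (mul_pos hzbar hpos) hmono
  have hK1 : ∀ t, 0 < K (t+1) := by
    intro t
    rw [heq.Kdyn t]
    exact mul_pos (mul_pos (mul_pos hβ0 hlam0) (heq.hW t)) hI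
  -- α < 1
  have halph1 : alph < 1 := by
    have hw := heq.wealth 0
    rw [hbond 0, heq.Wdyn 0, hGR] at hw
    have hk := hK1 0
    nlinarith [mul_pos hm hk, mul_pos hR0 hW0]
  have h1a : (1 : ℝ) - alph ≠ 0 := by linarith
  -- part 3
  have hpart3 : ∀ t, 1 ≤ t → W t = m * K t / (1 - alph) ∧
      P t = alph / (1 - alph) * (m * K t) + D / (R - 1) := by
    intro t ht
    obtain ⟨s, rfl⟩ : ∃ s, t = s + 1 := ⟨t - 1, (Nat.succ_pred_eq_of_pos ht).symm⟩
    have hw := heq.wealth s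
    rw [hbond s] at hw
    have hWd : W (s+1) = R * W s := by rw [heq.Wdyn s, hGR]
    have hWK : (1 - alph) * W (s+1) = m * K (s+1) := by
      linear_combination hw - alph * hWd
    constructor
    · field_simp
      linarith [hWK]
    · rw [hPW (s+1), ← hWK]
      field_simp
  refine ⟨hGR, hBall, hpart3, ?_, ?_⟩
  · intro h0 t
    rw [hPW t, hWR t, h0]
    have he : alph * (R ^ t * (m * K 0 / (1 - alph)))
        = alph / (1 - alph) * R ^ t * (m * K 0) := by
      field_simp
    linarith [he]
  · intro t
    rw [hPW t]
    have := mul_pos halph0 (heq.hW t)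
    linarith
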